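/- A Motzkin tree is uniquely closable (i.e., there exists exactly one closed lambda term in de Bruijn form having it as its skeleton) if and only if on every path from the root to a leaf there occurs exactly one unary node l. -/
import Mathlib


/-- Motzkin trees (binary-unary trees): leaf `v`, unary `l`, binary `a`. -/
inductive Mot : Type
  | v : Mot
  | l : Mot → Mot
  | a : Mot → Mot → Mot
deriving DecidableEq

/-- Lambda terms in de Bruijn form. -/
inductive Lam : Type
  | v : Nat → Lam
  | l : Lam → Lam
  | a : Lam → Lam → Lam
deriving DecidableEq

/-- `t` is closed at depth `d`. -/
def Lam.closedAt : Lam → Nat → Prop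
  | .v i, d => i < d
  | .l t, d => t.closedAt (d + 1)
  | .a s t, d => s.closedAt d ∧ t.closedAt d

/-- The Motzkin-tree skeleton of a de Bruijn term. -/
def Lam.skel : Lam → Mot
  | .v _ => .v
  | .l t => .l t.skel
  | .a s t => .a s.skel t.skel

/-- For each leaf (in left-to-right order), the number of unary `l` nodes on the
path from the root to that leaf, starting from `d` accumulated binders. -/
def Mot.leafDepths : Mot → Nat → List Nat
  | .v, d => [d]
  | .l t, d => t.leafDepths (d + 1)
  | .a s t, d => s.leafDepths d ++ t.leafDepths d

def Mot.canon : Mot → Lam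
  | .v => .v 0
  | .l t => .l t.canon
  | .a s t => .a s.canon t.canon

lemma canon_skel (X : Mot) : X.canon.skel = X := by
  induction X <;> simp [Mot.canon, Lam.skel, *]

lemma canon_closed (X : Mot) : ∀ d, (∀ d' ∈ X.leafDepths d, d' = 1) → X.canon.closedAt d := by
  induction X with
  | v => intro d h; simp [Mot.leafDepths] at h; simp [Mot.canon, Lam.closedAt]; omega
  | l Y ih => intro d h; exact ih (d+1) h
  | a Y Z ihY ihZ =>
      intro d h
      simp [Mot.leafDepths, List.mem_append] at h
      exact ⟨ihY d (fun d' hd => h d' (Or.inl hd)), ihZ d (fun d' hd => h d' (Or.inr hd))⟩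

lemma uniq_canon (X : Mot) : ∀ d t, (∀ d' ∈ X.leafDepths d, d' = 1) →
    Lam.closedAt t d → t.skel = X → t = X.canon := by
  induction X with
  | v =>
      intro d t h hc hs
      cases t with
      | v i =>
          simp [Mot.leafDepths] at h
          simp [Lam.closedAt] at hc
          simp [Mot.canon]; omega
      | l _ => simp [Lam.skel] at hs
      | a _ _ => simp [Lam.skel] at hs
  | l Y ih =>
      intro d t h hc hs
      cases t with
      | v _ => simp [Lam.skel] at hs
      | l s =>
          simp [Lam.skel] at hs
          simp [Mot.canon]
          exact ih (d+1) s (by simpa [Mot.leafDepths] using h) hc hs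
      | a _ _ => simp [Lam.skel] at hs
  | a Y Z ihY ihZ =>
      intro d t h hc hs
      cases t with
      | v _ => simp [Lam.skel] at hs
      | l _ => simp [Lam.skel] at hs
      | a s u =>
          simp [Lam.skel] at hs
          obtain ⟨hsY, huZ⟩ := hs
          obtain ⟨hcs, hcu⟩ := hc
          simp [Mot.leafDepths, List.mem_append] at h
          simp [Mot.canon]
          exact ⟨ihY d s (fun d' hd => h d' (Or.inl hd)) hcs hsY,
                 ihZ d u (fun d' hd => h d' (Or.inr hd)) hcu huZ⟩

lemma depths_pos (t : Lam) : ∀ d X, Lam.closedAt t d → t.skel = X →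
    ∀ d' ∈ X.leafDepths d, 1 ≤ d' := by
  induction t with
  | v i =>
      intro d X hc hs d' hd
      subst hs; simp [Lam.skel, Mot.leafDepths] at hd
      simp [Lam.closedAt] at hc; omega
  | l s ih =>
      intro d X hc hs d' hd
      subst hs
      exact ih (d+1) s.skel hc rfl d' hd
  | a s u ihs ihu =>
      intro d X hc hs d' hd
      subst hs
      simp [Lam.skel, Mot.leafDepths, List.mem_append] at hd
      rcases hd with hd | hd
      · exact ihs d s.skel hc.1 rfl d' hd
      · exact ihu d u.skel hc.2 rfl d' hd

lemma exists_other (X : Mot) : ∀ d t, Lam.closedAt t d → t.skel = X →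
    ∀ d' ∈ X.leafDepths d, 2 ≤ d' → ∃ t', t' ≠ t ∧ Lam.closedAt t' d ∧ t'.skel = X := by
  induction X with
  | v =>
      intro d t hc hs d' hd h2
      simp [Mot.leafDepths] at hd; subst hd
      cases t with
      | v i =>
          simp [Lam.closedAt] at hc
          refine ⟨.v (if i = 0 then 1 else 0), ?_, ?_, rfl⟩
          · intro h; simp at h; split at h <;> omega
          · simp only [Lam.closedAt]; split <;> omega
      | l _ => simp [Lam.skel] at hs
      | a _ _ => simp [Lam.skel] at hs
  | l Y ih =>
      intro d t hc hs d' hd h2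
      cases t with
      | v _ => simp [Lam.skel] at hs
      | l s =>
          simp [Lam.skel] at hs
          obtain ⟨t', hne, hc', hs'⟩ := ih (d+1) s hc hs d' hd h2
          exact ⟨.l t', by simpa using hne, hc', by simp [Lam.skel, hs']⟩
      | a _ _ => simp [Lam.skel] at hs
  | a Y Z ihY ihZ =>
      intro d t hc hs d' hd h2
      cases t with
      | v _ => simp [Lam.skel] at hs
      | l _ => simp [Lam.skel] at hs
      | a s u =>
          simp [Lam.skel] at hs
          obtain ⟨hsY, huZ⟩ := hs
          simp [Mot.leafDepths, List.mem_append] at hd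
          rcases hd with hd | hd
          · obtain ⟨t', hne, hc', hs'⟩ := ihY d s hc.1 hsY d' hd h2
            exact ⟨.a t' u, by simpa using hne, ⟨hc', hc.2⟩,
                   by simp [Lam.skel, hs', huZ]⟩
          · obtain ⟨t', hne, hc', hs'⟩ := ihZ d u hc.2 huZ d' hd h2
            exact ⟨.a s t', by simpa using hne, ⟨hc.1, hc'⟩,
                   by simp [Lam.skel, hs', hsY]⟩

/-- A Motzkin tree is uniquely closable iff every root-to-leaf path contains
exactly one unary node `l`. -/
theorem stmt3 (X : Mot) :
    (∃! t : Lam, t.closedAt 0 ∧ t.skel = X) ↔ ∀ d ∈ X.leafDepths 0, d = 1 := by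
  constructor
  · rintro ⟨t, ⟨hc, hs⟩, huniq⟩ d hd
    have h1 : 1 ≤ d := depths_pos t 0 X hc hs d hd
    by_contra hne
    have h2 : 2 ≤ d := by omega
    obtain ⟨t', hne', hc', hs'⟩ := exists_other X 0 t hc hs d hd h2
    exact hne' (huniq t' ⟨hc', hs'⟩)
  · intro h
    exact ⟨X.canon, ⟨canon_closed X 0 h, canon_skel X⟩,
      fun t ⟨hc, hs⟩ => uniq_canon X 0 t h hc hs⟩
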